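/- The expansion C₁(z₁I−A₁₁)^{-1}A₁₂(z₂I−A₂₂)^{-1}B₂ with A₁₁, A₂₂ the shift matrices, C₁ = [0...0 I], B₂ = [0;...;0;I], and (A₁₂)_{k,ℓ} = K[r₁+1−k, r₂+1−ℓ], equals ∑_{j₁=1}^{r₁}∑_{j₂=1}^{r₂} K[j₁,j₂] z₁^{−j₁} z₂^{−j₂}. -/

import Mathlib

open Matrix

lemma lowerShiftInv (n c : ℕ) (z : ℝ) (hz : z ≠ 0)
    (A : Matrix (Fin n × Fin c) (Fin n × Fin c) ℝ)
    (hA : ∀ p q, A p q = if (p.1 : ℕ) = (q.1 : ℕ) + 1 ∧ p.2 = q.2 then 1 else 0) :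
    (z • 1 - A)⁻¹ = Matrix.of fun p q =>
      if (q.1 : ℕ) ≤ (p.1 : ℕ) ∧ p.2 = q.2 then z⁻¹ ^ ((p.1 : ℕ) - (q.1 : ℕ) + 1) else 0 := by
  set N : Matrix (Fin n × Fin c) (Fin n × Fin c) ℝ := Matrix.of fun p q =>
      if (q.1 : ℕ) ≤ (p.1 : ℕ) ∧ p.2 = q.2 then z⁻¹ ^ ((p.1 : ℕ) - (q.1 : ℕ) + 1) else 0
      with hN
  apply Matrix.inv_eq_right_inv
  have hAN : ∀ i (a : Fin c) q, (A * N) (i, a) q =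
      if h : 0 < (i : ℕ) then N (⟨(i : ℕ) - 1, by omega⟩, a) q else 0 := by
    intro i a q
    rw [Matrix.mul_apply]
    split_ifs with h
    · refine Finset.sum_eq_single (⟨(⟨(i : ℕ) - 1, by omega⟩ : Fin n), a⟩) ?_ (by simp) |>.trans ?_
      · rintro ⟨k, e⟩ - hne
        rw [hA]
        simp only [ite_mul, one_mul, zero_mul, ite_eq_right_iff]
        rintro ⟨h1, h2⟩
        exact absurd (Prod.ext (Fin.ext ((by omega : (k:ℕ) = (i:ℕ) - 1))) h2.symm) hne
      · rw [hA]
        rw [if_pos ⟨(by omega : (i:ℕ) = (i:ℕ) - 1 + 1), rfl⟩, one_mul]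
    · refine Finset.sum_eq_zero ?_
      rintro ⟨k, e⟩ -
      rw [hA]
      simp only [ite_mul, one_mul, zero_mul, ite_eq_right_iff]
      rintro ⟨h1, -⟩
      omega
  ext ⟨i, a⟩ ⟨j, b⟩
  rw [Matrix.sub_mul, Matrix.smul_mul, Matrix.one_mul, Matrix.sub_apply, Matrix.smul_apply,
    hAN, Matrix.one_apply]
  have hz' : z * z⁻¹ = 1 := mul_inv_cancel₀ hz
  have key : ∀ k : ℕ, z * z⁻¹ ^ (k + 1) = z⁻¹ ^ k := by
    intro k; rw [pow_succ']; rw [← mul_assoc, hz', one_mul]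
  by_cases hi : 0 < (i : ℕ)
  · rw [dif_pos hi]
    simp only [hN, Matrix.of_apply, smul_eq_mul, Prod.mk.injEq]
    by_cases hab : a = b
    · by_cases hji : (j : ℕ) ≤ (i : ℕ) - 1
      · rw [if_pos ⟨by omega, hab⟩, if_pos ⟨hji, hab⟩, if_neg (by rintro ⟨h1, -⟩; simp [Fin.ext_iff] at h1; omega)]
        rw [key]
        have : (i : ℕ) - (j : ℕ) = (i : ℕ) - 1 - (j : ℕ) + 1 := by omega
        rw [this]; ring
      · by_cases hji2 : (j : ℕ) ≤ (i : ℕ)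
        · have hij : (i : ℕ) = (j : ℕ) := by omega
          rw [if_pos ⟨hji2, hab⟩, if_neg (by rintro ⟨h1, -⟩; omega),
            if_pos ⟨Fin.ext hij, hab⟩]
          rw [show (i:ℕ) - (j:ℕ) = 0 by omega]
          simpa using hz'
        · rw [if_neg (by rintro ⟨h1, -⟩; omega), if_neg (by rintro ⟨h1, -⟩; omega),
            if_neg (by rintro ⟨h1, -⟩; simp [Fin.ext_iff] at h1; omega)]
          ring
    · rw [if_neg (by rintro ⟨-, h⟩; exact hab h), if_neg (by rintro ⟨-, h⟩; exact hab h),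
        if_neg (by rintro ⟨-, h⟩; exact hab h)]
      ring
  · rw [dif_neg hi]
    simp only [hN, Matrix.of_apply, smul_eq_mul, Prod.mk.injEq]
    by_cases hab : a = b
    · by_cases hji : (j : ℕ) ≤ (i : ℕ)
      · have hij : i = j := Fin.ext (by omega)
        rw [if_pos ⟨hji, hab⟩, if_pos ⟨hij, hab⟩]
        rw [show (i:ℕ) - (j:ℕ) = 0 by omega]
        simpa using hz'
      · rw [if_neg (by rintro ⟨h1, -⟩; omega), if_neg (by rintro ⟨h1, -⟩; simp [Fin.ext_iff] at h1; omega)]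
        ring
    · rw [if_neg (by rintro ⟨-, h⟩; exact hab h), if_neg (by rintro ⟨-, h⟩; exact hab h)]
      ring

lemma upperShiftInv (n c : ℕ) (z : ℝ) (hz : z ≠ 0)
    (A : Matrix (Fin n × Fin c) (Fin n × Fin c) ℝ)
    (hA : ∀ p q, A p q = if (q.1 : ℕ) = (p.1 : ℕ) + 1 ∧ p.2 = q.2 then 1 else 0) :
    (z • 1 - A)⁻¹ = Matrix.of fun p q =>
      if (p.1 : ℕ) ≤ (q.1 : ℕ) ∧ p.2 = q.2 then z⁻¹ ^ ((q.1 : ℕ) - (p.1 : ℕ) + 1) else 0 := by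
  have hT := lowerShiftInv n c z hz Aᵀ (fun p q => by
    rw [Matrix.transpose_apply, hA]
    congr 1
    exact propext (and_congr Iff.rfl eq_comm))
  have h3 : ((z • 1 - A)⁻¹)ᵀ = (z • 1 - Aᵀ)⁻¹ := by
    rw [Matrix.transpose_nonsing_inv, Matrix.transpose_sub, Matrix.transpose_smul,
      Matrix.transpose_one]
  have h4 := congrArg Matrix.transpose (h3.trans hT)
  rw [Matrix.transpose_transpose] at h4
  rw [h4]
  ext p q
  simp [Matrix.transpose_apply, eq_comm]


lemma sumReflect {M : Type*} [AddCommMonoid M] (r : ℕ) (f : ℕ → M) :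
    ∑ i : Fin r, f (r - (i : ℕ)) = ∑ j ∈ Finset.Icc 1 r, f j := by
  rw [Fin.sum_univ_eq_sum_range (fun k => f (r - k)) r]
  refine Finset.sum_nbij' (fun k => r - k) (fun k => r - k) ?_ ?_ ?_ ?_ ?_ <;>
    intro a ha <;> simp [Finset.mem_range, Finset.mem_Icc] at * <;> omega


/-- The cross term C₁(z₁I−A₁₁)⁻¹A₁₂(z₂I−A₂₂)⁻¹B₂ of the Theorem 1 realization equals
∑_{j₁=1}^{r₁}∑_{j₂=1}^{r₂} K[j₁,j₂] z₁^{−j₁} z₂^{−j₂}. -/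
theorem stmt15 (r₁ r₂ cin cout : ℕ) (hr₁ : 0 < r₁) (hr₂ : 0 < r₂)
    (K : ℕ → ℕ → Matrix (Fin cout) (Fin cin) ℝ)
    (A₁₁ : Matrix (Fin r₁ × Fin cout) (Fin r₁ × Fin cout) ℝ)
    (A₁₂ : Matrix (Fin r₁ × Fin cout) (Fin r₂ × Fin cin) ℝ)
    (A₂₂ : Matrix (Fin r₂ × Fin cin) (Fin r₂ × Fin cin) ℝ)
    (B₂ : Matrix (Fin r₂ × Fin cin) (Fin cin) ℝ)
    (C₁ : Matrix (Fin cout) (Fin r₁ × Fin cout) ℝ)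
    (hA₁₁ : ∀ p q, A₁₁ p q = if (p.1 : ℕ) = (q.1 : ℕ) + 1 ∧ p.2 = q.2 then 1 else 0)
    (hA₁₂ : ∀ p q, A₁₂ p q = K (r₁ - (p.1 : ℕ)) (r₂ - (q.1 : ℕ)) p.2 q.2)
    (hA₂₂ : ∀ p q, A₂₂ p q = if (q.1 : ℕ) = (p.1 : ℕ) + 1 ∧ p.2 = q.2 then 1 else 0)
    (hB₂ : ∀ p c, B₂ p c = if (p.1 : ℕ) = r₂ - 1 ∧ p.2 = c then 1 else 0)
    (hC₁ : ∀ o p, C₁ o p = if (p.1 : ℕ) = r₁ - 1 ∧ o = p.2 then 1 else 0)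
    (z₁ z₂ : ℝ) (hz₁ : z₁ ≠ 0) (hz₂ : z₂ ≠ 0) :
    C₁ * (z₁ • 1 - A₁₁)⁻¹ * A₁₂ * (z₂ • 1 - A₂₂)⁻¹ * B₂ =
      ∑ j₁ ∈ Finset.Icc 1 r₁, ∑ j₂ ∈ Finset.Icc 1 r₂,
        (z₁⁻¹ ^ j₁ * z₂⁻¹ ^ j₂) • K j₁ j₂ := by
  rw [lowerShiftInv r₁ cout z₁ hz₁ A₁₁ hA₁₁, upperShiftInv r₂ cin z₂ hz₂ A₂₂ hA₂₂]
  have hL : C₁ * ((Matrix.of fun p q =>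
      if (q.1 : ℕ) ≤ (p.1 : ℕ) ∧ p.2 = q.2 then z₁⁻¹ ^ ((p.1 : ℕ) - (q.1 : ℕ) + 1) else 0) : Matrix (Fin r₁ × Fin cout) (Fin r₁ × Fin cout) ℝ) =
      Matrix.of fun o (p : Fin r₁ × Fin cout) =>
        if o = p.2 then z₁⁻¹ ^ (r₁ - (p.1 : ℕ)) else 0 := by
    ext o ⟨j, b⟩
    rw [Matrix.mul_apply]
    refine Finset.sum_eq_single (⟨(⟨r₁ - 1, by omega⟩ : Fin r₁), o⟩) ?_ (by simp) |>.trans ?_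
    · rintro ⟨k, e⟩ - hne
      rw [hC₁]
      simp only [ite_mul, one_mul, zero_mul, ite_eq_right_iff]
      rintro ⟨h1, h2⟩
      exact absurd (Prod.ext (Fin.ext ((by omega : (k:ℕ) = r₁ - 1))) h2.symm) hne
    · rw [hC₁, if_pos ⟨rfl, rfl⟩, one_mul, Matrix.of_apply, Matrix.of_apply]
      have hj := j.isLt
      by_cases hob : o = b
      · rw [if_pos ⟨(by omega : (j:ℕ) ≤ r₁ - 1), hob⟩, if_pos hob]
        congr 1
        show r₁ - 1 - (j:ℕ) + 1 = r₁ - (j:ℕ)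
        omega
      · rw [if_neg (by rintro ⟨-, h⟩; exact hob h), if_neg hob]
  have hR : ((Matrix.of fun p q =>
      if (p.1 : ℕ) ≤ (q.1 : ℕ) ∧ p.2 = q.2 then z₂⁻¹ ^ ((q.1 : ℕ) - (p.1 : ℕ) + 1) else 0) : Matrix (Fin r₂ × Fin cin) (Fin r₂ × Fin cin) ℝ) * B₂ =
      Matrix.of fun (p : Fin r₂ × Fin cin) c =>
        if p.2 = c then z₂⁻¹ ^ (r₂ - (p.1 : ℕ)) else 0 := by
    ext ⟨j, b⟩ c
    rw [Matrix.mul_apply]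
    refine Finset.sum_eq_single (⟨(⟨r₂ - 1, by omega⟩ : Fin r₂), c⟩) ?_ (by simp) |>.trans ?_
    · rintro ⟨k, e⟩ - hne
      rw [hB₂]
      simp only [mul_ite, mul_one, mul_zero, ite_eq_right_iff]
      rintro ⟨h1, h2⟩
      exact absurd (Prod.ext (Fin.ext ((by omega : (k:ℕ) = r₂ - 1))) h2) hne
    · rw [hB₂, if_pos ⟨rfl, rfl⟩, mul_one, Matrix.of_apply, Matrix.of_apply]
      have hj := j.isLt
      by_cases hbc : b = c
      · rw [if_pos ⟨(by omega : (j:ℕ) ≤ r₂ - 1), hbc⟩, if_pos hbc]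
        congr 1
        show r₂ - 1 - (j:ℕ) + 1 = r₂ - (j:ℕ)
        omega
      · rw [if_neg (by rintro ⟨-, h⟩; exact hbc h), if_neg hbc]
  rw [hL, Matrix.mul_assoc, hR]
  ext o c
  rw [Matrix.mul_apply]
  simp only [Matrix.mul_apply, Matrix.of_apply, hA₁₂, Fintype.sum_prod_type, ite_mul, zero_mul,
    mul_ite, mul_zero, Finset.sum_ite_eq, Finset.sum_ite_eq', Finset.mem_univ, if_true]
  simp only [Matrix.sum_apply, Finset.sum_apply, Matrix.smul_apply, smul_eq_mul, Finset.sum_mul]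
  rw [Finset.sum_comm]
  rw [← sumReflect r₁ (fun j₁ => ∑ j₂ ∈ Finset.Icc 1 r₂, z₁⁻¹ ^ j₁ * z₂⁻¹ ^ j₂ * K j₁ j₂ o c)]
  refine Finset.sum_congr rfl fun i _ => ?_
  rw [← sumReflect r₂ (fun j₂ => z₁⁻¹ ^ (r₁ - (i:ℕ)) * z₂⁻¹ ^ j₂ * K (r₁ - (i:ℕ)) j₂ o c)]
  exact Finset.sum_congr rfl fun jj _ => by ring
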